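/- Let Y ∈ {0,1} and G ∈ {L,H} be random variables with base rates μ_L = P[Y=1|G=L] and μ_H = P[Y=1|G=H] satisfying 0 < μ_L < μ_H < 1. Let ŷ ∈ {0,1} be a classifier with group positive-classification rates μ̂_G = P[ŷ=1|G] > 0. If P[G=L|ŷ=1] ≤ P[G=L|Y=1] (with 0 < P[G=L] < 1), then μ̂_H/μ̂_L ≥ μ_H/μ_L. -/

import Mathlib

open MeasureTheory

/-- Conditional probability `P[A | B]` as a real number. -/
noncomputable def condProb {Ω : Type*} [MeasurableSpace Ω] (P : Measure Ω) (A B : Set Ω) : ℝ :=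
  (P (A ∩ B)).toReal / (P B).toReal

lemma split_toReal {Ω : Type*} [MeasurableSpace Ω] (P : Measure Ω) [IsProbabilityMeasure P]
    (S EL : Set Ω) (hGL : MeasurableSet EL) :
    (P S).toReal = (P (S ∩ EL)).toReal + (P (S ∩ ELᶜ)).toReal := by
  have h := measure_inter_add_diff (μ := P) S hGL
  rw [Set.diff_eq] at h
  rw [← h, ENNReal.toReal_add (measure_ne_top P _) (measure_ne_top P _)]

/-- If the L group is not over-represented among positive classifications, then
the ratio of positive-classification rates is at least the ratio of base rates. -/
theorem classification_rate_ratio_ge_base_rate_ratio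
    {Ω : Type*} [MeasurableSpace Ω] (P : Measure Ω) [IsProbabilityMeasure P]
    (Y1 Yhat1 EL : Set Ω)
    (hY1 : MeasurableSet Y1) (hYhat1 : MeasurableSet Yhat1) (hGL : MeasurableSet EL)
    (hGLpos : P EL ≠ 0) (hGHpos : P ELᶜ ≠ 0)
    (hY1pos : P Y1 ≠ 0) (hYhat1pos : P Yhat1 ≠ 0)
    (μL μH μhatL μhatH : ℝ)
    (hμL : μL = condProb P Y1 EL) (hμH : μH = condProb P Y1 ELᶜ)
    (hμhatL : μhatL = condProb P Yhat1 EL) (hμhatH : μhatH = condProb P Yhat1 ELᶜ)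
    (h0 : 0 < μL) (h1 : μL < μH) (h2 : μH < 1)
    (hhatL : 0 < μhatL) (hhatH : 0 < μhatH)
    (hnotover : condProb P EL Yhat1 ≤ condProb P EL Y1) :
    μhatH / μhatL ≥ μH / μL := by
  set pL := (P EL).toReal with hpL
  set pH := (P ELᶜ).toReal with hpH
  have hpLpos : 0 < pL := ENNReal.toReal_pos hGLpos (measure_ne_top P _)
  have hpHpos : 0 < pH := ENNReal.toReal_pos hGHpos (measure_ne_top P _)
  have hYsplit := split_toReal P Y1 EL hGL
  have hYhatsplit := split_toReal P Yhat1 EL hGL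
  have hYpos : 0 < (P Y1).toReal := ENNReal.toReal_pos hY1pos (measure_ne_top P _)
  have hYhatpos : 0 < (P Yhat1).toReal := ENNReal.toReal_pos hYhat1pos (measure_ne_top P _)
  have hx : (P (Y1 ∩ EL)).toReal = μL * pL := by
    rw [hμL]; unfold condProb; field_simp
    rw [← hpL, mul_div_assoc, div_self hpLpos.ne', mul_one]
  have hx' : (P (Y1 ∩ ELᶜ)).toReal = μH * pH := by
    rw [hμH]; unfold condProb; field_simp
    rw [← hpH, mul_div_assoc, div_self hpHpos.ne', mul_one]
  have hz : (P (Yhat1 ∩ EL)).toReal = μhatL * pL := by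
    rw [hμhatL]; unfold condProb; field_simp
    rw [← hpL, mul_div_assoc, div_self hpLpos.ne', mul_one]
  have hz' : (P (Yhat1 ∩ ELᶜ)).toReal = μhatH * pH := by
    rw [hμhatH]; unfold condProb; field_simp
    rw [← hpH, mul_div_assoc, div_self hpHpos.ne', mul_one]
  rw [hx, hx'] at hYsplit
  rw [hz, hz'] at hYhatsplit
  unfold condProb at hnotover
  rw [Set.inter_comm EL Yhat1, Set.inter_comm EL Y1, hx, hz, hYsplit, hYhatsplit] at hnotover
  rw [div_le_div_iff₀ (by nlinarith) (by nlinarith)] at hnotover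
  have key : μH * μhatL ≤ μhatH * μL := by nlinarith [mul_pos hpLpos hpHpos]
  rw [ge_iff_le, div_le_div_iff₀ h0 hhatL]
  linarith
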